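/- arXiv:1612.08921 — 2 statements merged into one kernel-verified Lean document; each statement's English description precedes it below -/
import Mathlib

section
/- Let 1 < p < ∞ and let Ω ⊆ ℝ^N be a bounded nonempty open set. Then the first Dirichlet eigenvalue of the p-Laplacian, λ₁ = inf of ∫_Ω |∇u|^p dx / ∫_Ω |u|^p dx over all nonzero C¹ functions u with compact support in Ω, is strictly positive. -/
open MeasureTheory Set

open scoped ENNReal NNReal

noncomputable section

/-- The first Dirichlet eigenvalue of the `p`-Laplacian on `Ω`:
the infimum of the Rayleigh quotients over nonzero `C¹` functions compactly supported in `Ω`. -/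
def lambda1 (N : ℕ) (p : ℝ) (Ω : Set (EuclideanSpace ℝ (Fin N))) : ℝ :=
  sInf {r : ℝ | ∃ u : EuclideanSpace ℝ (Fin N) → ℝ,
    ContDiff ℝ 1 u ∧ HasCompactSupport u ∧ tsupport u ⊆ Ω ∧ u ≠ 0 ∧
    r = (∫ x in Ω, ‖gradient u x‖ ^ p) / ∫ x in Ω, |u x| ^ p}

private lemma oneDim {p : ℝ} (hp : 1 < p) {R : ℝ} (hR : 0 < R) {v : ℝ → ℝ}
    (hv : ContDiff ℝ 1 v) (hsupp : tsupport v ⊆ Icc (-R) R) :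
    ∫⁻ t, (‖v t‖₊ : ℝ≥0∞) ^ p ≤
      (ENNReal.ofReal (2*R+1)) ^ p * ∫⁻ t, (‖deriv v t‖₊ : ℝ≥0∞) ^ p := by
  have hp0 : (0:ℝ) < p := by linarith
  set q : ℝ := p / (p - 1) with hq
  have hpq : p.HolderConjugate q := Real.HolderConjugate.conjExponent hp
  set a : ℝ := -R - 1 with ha
  set J : Set ℝ := Icc a R with hJ
  have hvolJ : volume J = ENNReal.ofReal (2*R+1) := by
    rw [hJ, Real.volume_Icc]; congr 1; ring
  have hvolJ0 : volume J ≠ 0 := by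
    rw [hvolJ]; simp only [ne_eq, ENNReal.ofReal_eq_zero, not_le]; linarith
  have hvolJt : volume J ≠ ⊤ := by rw [hvolJ]; exact ENNReal.ofReal_ne_top
  have hpd : Continuous (deriv v) := hv.continuous_deriv le_rfl
  have hint : IntegrableOn (fun t => ‖deriv v t‖) J := hpd.norm.integrableOn_Icc
  -- pointwise bound
  have hpt : ∀ x : ℝ, (‖v x‖₊ : ℝ≥0∞) ≤ ∫⁻ t in J, (‖deriv v t‖₊ : ℝ≥0∞) := by
    intro x
    rcases eq_or_ne (v x) 0 with h0 | h0
    · simp [h0]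
    · have hx : x ∈ Icc (-R) R := hsupp (subset_tsupport v h0)
      have hax : a ≤ x := by have := hx.1; simp only [ha]; linarith
      have hva : v a = 0 := by
        apply image_eq_zero_of_notMem_tsupport
        intro h; have := (hsupp h).1; simp only [ha] at this; linarith
      have hftc : ∫ t in a..x, deriv v t = v x - v a := by
        apply intervalIntegral.integral_eq_sub_of_hasDerivAt
        · exact fun t _ => (hv.differentiable one_ne_zero t).hasDerivAt
        · exact hpd.intervalIntegrable a x
      have h1 : ‖v x‖ ≤ ∫ t in a..x, ‖deriv v t‖ := by
        calc ‖v x‖ = ‖∫ t in a..x, deriv v t‖ := by rw [hftc, hva, sub_zero]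
        _ ≤ ∫ t in a..x, ‖deriv v t‖ := intervalIntegral.norm_integral_le_integral_norm hax
      have h2 : ∫ t in a..x, ‖deriv v t‖ ≤ ∫ t in J, ‖deriv v t‖ := by
        rw [intervalIntegral.integral_of_le hax]
        apply setIntegral_mono_set hint
        · exact Filter.Eventually.of_forall fun t => norm_nonneg _
        · exact HasSubset.Subset.eventuallyLE (Ioc_subset_Icc_self.trans
            (Icc_subset_Icc le_rfl hx.2))
      calc (‖v x‖₊ : ℝ≥0∞) = ENNReal.ofReal ‖v x‖ := (ofReal_norm _).symm
      _ ≤ ENNReal.ofReal (∫ t in J, ‖deriv v t‖) := ENNReal.ofReal_le_ofReal (h1.trans h2)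
      _ = ∫⁻ t in J, (‖deriv v t‖₊ : ℝ≥0∞) := by
          rw [ofReal_integral_eq_lintegral_ofReal hint
            (Filter.Eventually.of_forall fun t => norm_nonneg _)]
          simp_rw [ofReal_norm, enorm_eq_nnnorm]
  set M : ℝ≥0∞ := ∫⁻ t in J, (‖deriv v t‖₊ : ℝ≥0∞) with hM
  set I : ℝ≥0∞ := ∫⁻ t in J, (‖deriv v t‖₊ : ℝ≥0∞) ^ p with hI
  have hholder : M ≤ I ^ (1/p) * (volume J) ^ (1/q) := by
    have := ENNReal.lintegral_mul_le_Lp_mul_Lq (volume.restrict J) hpq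
      (hpd.measurable.nnnorm.coe_nnreal_ennreal.aemeasurable) aemeasurable_const
      (f := fun t => (‖deriv v t‖₊ : ℝ≥0∞)) (g := fun _ => 1)
    simpa [ENNReal.one_rpow, hI] using this
  have hMp : M ^ p ≤ I * (volume J) ^ (p/q) := by
    calc M ^ p ≤ (I ^ (1/p) * (volume J) ^ (1/q)) ^ p :=
        ENNReal.rpow_le_rpow hholder hp0.le
    _ = (I ^ (1/p)) ^ p * ((volume J) ^ (1/q)) ^ p :=
        ENNReal.mul_rpow_of_nonneg _ _ hp0.le
    _ = I * (volume J) ^ (p/q) := by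
        rw [← ENNReal.rpow_mul, ← ENNReal.rpow_mul]
        rw [one_div, inv_mul_cancel₀ hp0.ne']
        rw [ENNReal.rpow_one]
        congr 1
        field_simp
  have hsupp2 : Function.support (fun t => (‖v t‖₊ : ℝ≥0∞) ^ p) ⊆ J := by
    intro t ht
    rcases eq_or_ne (v t) 0 with h0 | h0
    · exfalso; apply ht; simp [h0, ENNReal.zero_rpow_of_pos hp0]
    · have hmem := hsupp (subset_tsupport v h0)
      refine Icc_subset_Icc ?_ le_rfl hmem
      simp only [ha]; linarith
  calc ∫⁻ t, (‖v t‖₊ : ℝ≥0∞) ^ p = ∫⁻ t in J, (‖v t‖₊ : ℝ≥0∞) ^ p :=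
      (setLIntegral_eq_of_support_subset hsupp2).symm
  _ ≤ ∫⁻ _ in J, M ^ p := lintegral_mono fun t => ENNReal.rpow_le_rpow (hpt t) hp0.le
  _ = M ^ p * volume J := by rw [setLIntegral_const]
  _ ≤ (I * (volume J) ^ (p/q)) * volume J := mul_le_mul_left hMp _
  _ = (volume J) ^ p * I := by
      have hpq1 : p/q + 1 = p := by
        rw [hq]
        have h1 : p - 1 ≠ 0 := by linarith
        field_simp
        ring
      have hv2 : (volume J)^(p/q) * volume J = (volume J)^p := by
        have h2 := ENNReal.rpow_add (p/q) 1 hvolJ0 hvolJt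
        rw [ENNReal.rpow_one] at h2
        rw [← h2, hpq1]
      rw [mul_assoc, hv2, mul_comm]
  _ ≤ (volume J) ^ p * ∫⁻ t, (‖deriv v t‖₊ : ℝ≥0∞) ^ p := by
      apply mul_le_mul_right
      exact setLIntegral_le_lintegral _ _
  _ = (ENNReal.ofReal (2*R+1)) ^ p * ∫⁻ t, (‖deriv v t‖₊ : ℝ≥0∞) ^ p := by rw [hvolJ]

/-- Auxiliary: the linear isometry equivalence `ℝ ≃ EuclideanSpace ℝ (Fin 1)`. -/
noncomputable def phi1 : ℝ ≃ₗᵢ[ℝ] EuclideanSpace ℝ (Fin 1) where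
  toLinearEquiv := (LinearEquiv.funUnique (Fin 1) ℝ ℝ).symm.trans
    (WithLp.linearEquiv 2 ℝ (Fin 1 → ℝ)).symm
  norm_map' := fun t => by
    simp [EuclideanSpace.norm_eq, Real.sqrt_sq_eq_abs, Real.norm_eq_abs]

private lemma poincare {N : ℕ} (hN : 0 < N) {p : ℝ} (hp : 1 < p)
    {Ω : Set (EuclideanSpace ℝ (Fin N))} (hΩb : Bornology.IsBounded Ω) :
    ∃ C : ℝ≥0∞, C ≠ ⊤ ∧ ∀ u : EuclideanSpace ℝ (Fin N) → ℝ,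
      ContDiff ℝ 1 u → HasCompactSupport u → tsupport u ⊆ Ω →
      (∫⁻ x, (‖u x‖₊ : ℝ≥0∞) ^ p) ≤ C * ∫⁻ x, (‖fderiv ℝ u x‖₊ : ℝ≥0∞) ^ p := by
  have hp0 : (0:ℝ) < p := by linarith
  obtain rfl | hN2 : N = 1 ∨ 2 ≤ N := by omega
  · -- dimension 1 : transport to ℝ
    obtain ⟨R, hΩR⟩ := hΩb.subset_closedBall 0
    set R' : ℝ := max R 1 with hR'
    have hR'0 : (0:ℝ) < R' := lt_of_lt_of_le one_pos (le_max_right _ _)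
    refine ⟨(ENNReal.ofReal (2*R'+1)) ^ p, ENNReal.rpow_ne_top_of_nonneg hp0.le
      ENNReal.ofReal_ne_top, ?_⟩
    intro u hu h2u h3u
    set v : ℝ → ℝ := u ∘ phi1 with hv
    have hvc : ContDiff ℝ 1 v := hu.comp (phi1.toContinuousLinearEquiv.contDiff)
    have hvsupp : tsupport v ⊆ Icc (-R') R' := by
      apply closure_minimal _ isClosed_Icc
      intro t ht
      have h1 : phi1 t ∈ Ω := h3u (subset_tsupport u ht)
      have h2 : ‖phi1 t‖ ≤ R := by
        have := hΩR h1
        simpa [Metric.mem_closedBall, dist_zero_right] using this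
      rw [phi1.norm_map] at h2
      have h4 : |t| ≤ R' := le_trans h2 (le_max_left _ _)
      exact mem_Icc.mpr (abs_le.mp h4)
    have hmp : MeasurePreserving phi1 volume volume := phi1.measurePreserving
    have hmu : Measurable fun x : EuclideanSpace ℝ (Fin 1) => (‖u x‖₊ : ℝ≥0∞) ^ p :=
      (hu.continuous.measurable.nnnorm.coe_nnreal_ennreal).pow_const _
    have hmf : Measurable fun x : EuclideanSpace ℝ (Fin 1) =>
        (‖fderiv ℝ u x‖₊ : ℝ≥0∞) ^ p :=
      ((hu.continuous_fderiv one_ne_zero).measurable.nnnorm.coe_nnreal_ennreal).pow_const _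
    have e1 : ∫⁻ x, (‖u x‖₊ : ℝ≥0∞) ^ p = ∫⁻ t, (‖v t‖₊ : ℝ≥0∞) ^ p :=
      (hmp.lintegral_comp hmu).symm
    have e2 : ∫⁻ x, (‖fderiv ℝ u x‖₊ : ℝ≥0∞) ^ p
        = ∫⁻ t, (‖fderiv ℝ u (phi1 t)‖₊ : ℝ≥0∞) ^ p :=
      (hmp.lintegral_comp hmf).symm
    have hder : ∀ t : ℝ, ‖deriv v t‖₊ ≤ ‖fderiv ℝ u (phi1 t)‖₊ := by
      intro t
      have hφ : HasDerivAt (fun s : ℝ => phi1 s) (phi1 1) t := by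
        have h1 : (fun s : ℝ => phi1 s) = fun s : ℝ => s • (phi1 1) := by
          funext s
          rw [← phi1.map_smul, smul_eq_mul, mul_one]
        rw [h1]
        simpa using (hasDerivAt_id t).smul_const (phi1 1)
      have hc : HasDerivAt v (fderiv ℝ u (phi1 t) (phi1 1)) t :=
        (hu.differentiable one_ne_zero (phi1 t)).hasFDerivAt.comp_hasDerivAt t hφ
      rw [hc.deriv]
      have hle := (fderiv ℝ u (phi1 t)).le_opNorm (phi1 1)
      have h1n : ‖(phi1 1 : EuclideanSpace ℝ (Fin 1))‖ = ‖(1:ℝ)‖ := phi1.norm_map 1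
      rw [h1n, norm_one, mul_one] at hle
      rw [← NNReal.coe_le_coe]
      simpa using hle
    rw [e1, e2]
    calc ∫⁻ t, (‖v t‖₊ : ℝ≥0∞) ^ p
        ≤ (ENNReal.ofReal (2*R'+1)) ^ p * ∫⁻ t, (‖deriv v t‖₊ : ℝ≥0∞) ^ p :=
          oneDim hp hR'0 hvc hvsupp
      _ ≤ (ENNReal.ofReal (2*R'+1)) ^ p * ∫⁻ t, (‖fderiv ℝ u (phi1 t)‖₊ : ℝ≥0∞) ^ p := by
          apply mul_le_mul_right
          apply lintegral_mono
          intro t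
          exact ENNReal.rpow_le_rpow (by exact_mod_cast hder t) hp0.le
  · -- dimension ≥ 2 : Gagliardo–Nirenberg–Sobolev + Hölder
    have hfr : Module.finrank ℝ (EuclideanSpace ℝ (Fin N)) = N := finrank_euclideanSpace_fin
    have hn2 : (2:ℝ) ≤ (N:ℝ) := by exact_mod_cast hN2
    set P₀ : ℝ := max 1 (p * N / (N + p)) with hP₀
    have hP₀pos : 0 < P₀ := lt_of_lt_of_le one_pos (le_max_left _ _)
    set P : ℝ≥0 := P₀.toNNReal with hPdef
    set q : ℝ≥0 := p.toNNReal with hqdef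
    have hPco : (P : ℝ) = P₀ := Real.coe_toNNReal _ hP₀pos.le
    have hqco : (q : ℝ) = p := Real.coe_toNNReal _ hp0.le
    have hNp : (0:ℝ) < (N:ℝ) + p := by linarith
    have hP1 : 1 ≤ P := by
      rw [← NNReal.coe_le_coe, hPco, NNReal.coe_one]; exact le_max_left _ _
    have h2P : (P:ℝ) < N := by
      rw [hPco, hP₀]
      apply max_lt (by linarith)
      rw [div_lt_iff₀ hNp]
      nlinarith
    have hPq : P ≤ q := by
      rw [← NNReal.coe_le_coe, hPco, hqco, hP₀]
      apply max_le hp.le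
      rw [div_le_iff₀ hNp]
      nlinarith
    have hPinv : (P:ℝ)⁻¹ - (N:ℝ)⁻¹ ≤ ((q:ℝ))⁻¹ := by
      rw [hPco, hqco]
      have h1 : p * N / (N + p) ≤ P₀ := le_max_right _ _
      have h2 : (0:ℝ) < p * N / (N + p) := by positivity
      have h3 : P₀⁻¹ ≤ (p * N / (N + p))⁻¹ := by
        apply inv_anti₀ h2 h1
      have h4 : (p * N / (N + p))⁻¹ = p⁻¹ + (N:ℝ)⁻¹ := by
        field_simp
      rw [h4] at h3
      have h5 : (0:ℝ) < (N:ℝ)⁻¹ := by positivity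
      linarith
    -- Sobolev inequality
    have hq0 : ((q:ℝ≥0∞)) ≠ 0 := by
      simp only [ne_eq, ENNReal.coe_eq_zero]
      intro h
      rw [h] at hqco
      simp at hqco
      linarith
    have hqt : ((q:ℝ≥0∞)) ≠ ⊤ := ENNReal.coe_ne_top
    have hqtr : ((q:ℝ≥0∞)).toReal = p := by simp [hqco]
    have hΩfin : volume Ω ≠ ⊤ := hΩb.measure_lt_top.ne
    set e : ℝ := 1/(P:ℝ) - 1/p with he
    have he0 : 0 ≤ e := by
      rw [he, sub_nonneg]
      apply one_div_le_one_div_of_le (by rw [hPco]; exact hP₀pos)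
      rw [← hqco]; exact_mod_cast hPq
    set D : ℝ≥0∞ := (volume Ω) ^ e with hD
    have hDt : D ≠ ⊤ := ENNReal.rpow_ne_top_of_nonneg he0 hΩfin
    set C₁ : ℝ≥0 := eLpNormLESNormFDerivOfLeConst ℝ (volume
      (α := EuclideanSpace ℝ (Fin N))) Ω P q with hC₁
    set K : ℝ≥0∞ := (C₁ : ℝ≥0∞) * D with hK
    have hKt : K ≠ ⊤ := ENNReal.mul_ne_top ENNReal.coe_ne_top hDt
    refine ⟨K ^ p, ENNReal.rpow_ne_top_of_nonneg hp0.le hKt, ?_⟩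
    intro u hu h2u h3u
    have hsupp : Function.support u ⊆ Ω := (subset_tsupport u).trans h3u
    have h2p' : P < (Module.finrank ℝ (EuclideanSpace ℝ (Fin N)) : ℝ≥0) := by
      rw [hfr, ← NNReal.coe_lt_coe]
      simpa using h2P
    have hpq' : (P:ℝ)⁻¹ - (Module.finrank ℝ (EuclideanSpace ℝ (Fin N)) : ℝ)⁻¹ ≤ ((q:ℝ))⁻¹ := by
      rw [hfr]; exact hPinv
    have hsob := eLpNorm_le_eLpNorm_fderiv_of_le (F := ℝ) volume hu hsupp hP1 h2p' hpq' hΩb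
    -- Hölder step
    have hfsupp : Function.support (fderiv ℝ u) ⊆ Ω := (support_fderiv_subset ℝ).trans h3u
    have hfc : Continuous (fderiv ℝ u) := hu.continuous_fderiv one_ne_zero
    have hholder : eLpNorm (fderiv ℝ u) P volume ≤ eLpNorm (fderiv ℝ u) q volume * D := by
      calc eLpNorm (fderiv ℝ u) P volume
          = eLpNorm (fderiv ℝ u) P (volume.restrict Ω) :=
            (eLpNorm_restrict_eq_of_support_subset (ε := EuclideanSpace ℝ (Fin N) →L[ℝ] ℝ) hfsupp).symm
        _ ≤ eLpNorm (fderiv ℝ u) q (volume.restrict Ω) *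
            ((volume.restrict Ω) univ) ^ (1/((P:ℝ≥0∞)).toReal - 1/((q:ℝ≥0∞)).toReal) := by
            apply eLpNorm_le_eLpNorm_mul_rpow_measure_univ (by exact_mod_cast hPq)
            exact hfc.aestronglyMeasurable
        _ = eLpNorm (fderiv ℝ u) q volume * D := by
            rw [eLpNorm_restrict_eq_of_support_subset (ε := EuclideanSpace ℝ (Fin N) →L[ℝ] ℝ) hfsupp, Measure.restrict_apply_univ]
            congr 1
            rw [hD, he]
            congr 1
            simp [hqco]
    have hmain : eLpNorm u q volume ≤ K * eLpNorm (fderiv ℝ u) q volume := by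
      calc eLpNorm u q volume ≤ (C₁:ℝ≥0∞) * eLpNorm (fderiv ℝ u) P volume := hsob
        _ ≤ (C₁:ℝ≥0∞) * (eLpNorm (fderiv ℝ u) q volume * D) := mul_le_mul_right hholder _
        _ = K * eLpNorm (fderiv ℝ u) q volume := by rw [hK]; ring
    -- convert to lintegral form
    rw [eLpNorm_eq_lintegral_rpow_enorm_toReal (ε := ℝ) hq0 hqt, eLpNorm_eq_lintegral_rpow_enorm_toReal (ε := EuclideanSpace ℝ (Fin N) →L[ℝ] ℝ) hq0 hqt,
      hqtr] at hmain
    set X : ℝ≥0∞ := ∫⁻ x, (‖u x‖₊ : ℝ≥0∞) ^ p with hX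
    set Y : ℝ≥0∞ := ∫⁻ x, (‖fderiv ℝ u x‖₊ : ℝ≥0∞) ^ p with hY
    calc X = (X ^ (1/p)) ^ p := by
          rw [← ENNReal.rpow_mul, one_div, inv_mul_cancel₀ hp0.ne', ENNReal.rpow_one]
      _ ≤ (K * Y ^ (1/p)) ^ p := ENNReal.rpow_le_rpow hmain hp0.le
      _ = K ^ p * Y := by
          rw [ENNReal.mul_rpow_of_nonneg _ _ hp0.le, ← ENNReal.rpow_mul, one_div,
            inv_mul_cancel₀ hp0.ne', ENNReal.rpow_one]

/-- The first Dirichlet eigenvalue of the `p`-Laplacian on a bounded nonempty open set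
is strictly positive. -/
theorem lambda1_pos (N : ℕ) (p : ℝ) (Ω : Set (EuclideanSpace ℝ (Fin N)))
    (hN : 0 < N) (hp : 1 < p)
    (hΩne : Ω.Nonempty) (hΩb : Bornology.IsBounded Ω) (hΩo : IsOpen Ω) :
    0 < lambda1 N p Ω := by
  have hp0 : (0:ℝ) < p := by linarith
  obtain ⟨C, hCt, hkey⟩ := poincare hN hp hΩb
  set c : ℝ := (C.toReal + 1)⁻¹ with hc
  have hC0 : (0:ℝ) ≤ C.toReal := ENNReal.toReal_nonneg
  have hcpos : 0 < c := by positivity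
  -- the admissible set is nonempty (bump function)
  obtain ⟨x₀, hx₀⟩ := hΩne
  obtain ⟨ε, hε, hball⟩ := Metric.isOpen_iff.mp hΩo x₀ hx₀
  have hf : ∃ u : EuclideanSpace ℝ (Fin N) → ℝ,
      ContDiff ℝ 1 u ∧ HasCompactSupport u ∧ tsupport u ⊆ Ω ∧ u ≠ 0 := by
    let f : ContDiffBump x₀ := ⟨ε/2, 2*ε/3, by positivity, by linarith⟩
    refine ⟨f, f.contDiff, f.hasCompactSupport, ?_, ?_⟩
    · rw [f.tsupport_eq]
      exact (Metric.closedBall_subset_ball (by show 2*ε/3 < ε; linarith)).trans hball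
    · intro h
      have h1 : f x₀ = 1 := f.one_of_mem_closedBall (Metric.mem_closedBall_self (by positivity))
      rw [h] at h1
      simp at h1
  obtain ⟨u₀, hu₀, h2u₀, h3u₀, h4u₀⟩ := hf
  have hSne : {r : ℝ | ∃ u : EuclideanSpace ℝ (Fin N) → ℝ,
      ContDiff ℝ 1 u ∧ HasCompactSupport u ∧ tsupport u ⊆ Ω ∧ u ≠ 0 ∧
      r = (∫ x in Ω, ‖gradient u x‖ ^ p) / ∫ x in Ω, |u x| ^ p}.Nonempty :=
    ⟨_, ⟨u₀, hu₀, h2u₀, h3u₀, h4u₀, rfl⟩⟩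
  rw [lambda1]
  refine lt_of_lt_of_le hcpos (le_csInf hSne ?_)
  rintro r ⟨u, hu, h2u, h3u, hune, rfl⟩
  have hucont : Continuous u := hu.continuous
  have hBcont : Continuous fun x => |u x| ^ p :=
    hucont.abs.rpow_const fun x => Or.inr hp0.le
  have hBsupp : HasCompactSupport fun x => |u x| ^ p := by
    have : (fun x => |u x| ^ p) = (fun t : ℝ => |t| ^ p) ∘ u := rfl
    rw [this]
    exact h2u.comp_left (by simp [Real.zero_rpow hp0.ne'])
  have hBint : Integrable (fun x => |u x| ^ p) := hBcont.integrable_of_hasCompactSupport hBsupp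
  set B : ℝ := ∫ x in Ω, |u x| ^ p with hB
  -- B > 0
  have hBpos : 0 < B := by
    rw [hB, setIntegral_pos_iff_support_of_nonneg_ae
      (Filter.Eventually.of_forall fun x => by positivity) hBint.integrableOn]
    have hsup : Function.support (fun x => |u x| ^ p) = Function.support u := by
      ext x
      simp only [Function.mem_support, ne_eq, not_iff_not]
      rw [Real.rpow_eq_zero (abs_nonneg _) hp0.ne', abs_eq_zero]
    rw [hsup]
    have hopen : IsOpen (Function.support u) := by
      rw [Function.support_eq_preimage]
      exact isOpen_compl_singleton.preimage hucont
    have hne : (Function.support u).Nonempty := Function.support_nonempty_iff.mpr hune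
    have hsubΩ : Function.support u ⊆ Ω := (subset_tsupport u).trans h3u
    rw [inter_eq_left.mpr hsubΩ]
    exact hopen.measure_pos volume hne
  -- rewrite B and A as global integrals
  have hBeq : B = ∫ x, |u x| ^ p := by
    rw [hB]
    apply setIntegral_eq_integral_of_forall_compl_eq_zero
    intro x hx
    have hux : u x = 0 := image_eq_zero_of_notMem_tsupport fun h => hx (h3u h)
    rw [hux, abs_zero, Real.zero_rpow hp0.ne']
  have hgradnorm : ∀ x, ‖gradient u x‖ = ‖fderiv ℝ u x‖ := fun x =>
    LinearIsometryEquiv.norm_map _ _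
  set A : ℝ := ∫ x in Ω, ‖gradient u x‖ ^ p with hA
  have hAeq : A = ∫ x, ‖fderiv ℝ u x‖ ^ p := by
    rw [hA]
    have h1 : (fun x => ‖gradient u x‖ ^ p) = fun x => ‖fderiv ℝ u x‖ ^ p := by
      funext x; rw [hgradnorm]
    rw [h1]
    apply setIntegral_eq_integral_of_forall_compl_eq_zero
    intro x hx
    have hfx : fderiv ℝ u x = 0 := by
      by_contra h
      exact hx (h3u (support_fderiv_subset ℝ (Function.mem_support.mpr h)))
    rw [hfx]
    simp [Real.zero_rpow hp0.ne']
  have hfcont : Continuous (fderiv ℝ u) := hu.continuous_fderiv one_ne_zero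
  have hAcont : Continuous fun x => ‖fderiv ℝ u x‖ ^ p :=
    hfcont.norm.rpow_const fun x => Or.inr hp0.le
  have hAsupp : HasCompactSupport fun x => ‖fderiv ℝ u x‖ ^ p := by
    have heq : (fun x => ‖fderiv ℝ u x‖ ^ p)
        = (fun t : EuclideanSpace ℝ (Fin N) →L[ℝ] ℝ => ‖t‖ ^ p) ∘ (fderiv ℝ u) := rfl
    rw [heq]
    exact (HasCompactSupport.fderiv (𝕜 := ℝ) h2u).comp_left (by simp [Real.zero_rpow hp0.ne'])
  have hAint : Integrable (fun x => ‖fderiv ℝ u x‖ ^ p) :=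
    hAcont.integrable_of_hasCompactSupport hAsupp
  have hA0 : 0 ≤ A := by
    rw [hAeq]
    exact integral_nonneg fun x => Real.rpow_nonneg (norm_nonneg _) _
  -- transfer the key inequality to real integrals
  have h1 : ENNReal.ofReal B = ∫⁻ x, (‖u x‖₊ : ℝ≥0∞) ^ p := by
    rw [hBeq, ofReal_integral_eq_lintegral_ofReal hBint
      (Filter.Eventually.of_forall fun x => by positivity)]
    congr 1
    funext x
    rw [← enorm_eq_nnnorm, Real.enorm_eq_ofReal_abs, ← ENNReal.ofReal_rpow_of_nonneg (abs_nonneg _) hp0.le]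
  have h2 : ENNReal.ofReal A = ∫⁻ x, (‖fderiv ℝ u x‖₊ : ℝ≥0∞) ^ p := by
    rw [hAeq, ofReal_integral_eq_lintegral_ofReal hAint
      (Filter.Eventually.of_forall fun x => Real.rpow_nonneg (norm_nonneg _) _)]
    congr 1
    funext x
    rw [← enorm_eq_nnnorm, ← ofReal_norm, ← ENNReal.ofReal_rpow_of_nonneg (norm_nonneg _) hp0.le]
  have hkey2 : ENNReal.ofReal B ≤ C * ENNReal.ofReal A := by
    rw [h1, h2]
    exact hkey u hu h2u h3u
  have hkey3 : B ≤ C.toReal * A := by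
    have h3 := ENNReal.toReal_mono (ENNReal.mul_ne_top hCt ENNReal.ofReal_ne_top) hkey2
    rwa [ENNReal.toReal_ofReal hBpos.le, ENNReal.toReal_mul, ENNReal.toReal_ofReal hA0] at h3
  have hkey4 : B ≤ (C.toReal + 1) * A := by nlinarith
  -- conclude
  rw [le_div_iff₀ hBpos]
  calc c * B ≤ c * ((C.toReal + 1) * A) := by
        apply mul_le_mul_of_nonneg_left hkey4 hcpos.le
  _ = A := by
        rw [hc, ← mul_assoc, inv_mul_cancel₀ (by positivity), one_mul]
end
end

section
/- Let 1 < p < N, p* = Np/(N−p), let Ω ⊆ ℝ^N be a bounded nonempty open set, and let 0 < λ < λ₁ and μ > 0. Then for every C¹ function u with compact support in Ω, the modified energy satisfies I_μ(u) ≥ (1/p)(1 − λ/λ₁)(∫_Ω |∇u|^p dx) − (S^{−p*/p}/p*)(∫_Ω |∇u|^p dx)^{p*/p} − (1 − 1/p) μ |Ω|, where |Ω| is the Lebesgue measure of Ω. -/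
open MeasureTheory Set
open scoped NNReal ENNReal

noncomputable section

/-- The critical Sobolev exponent `p* = Np/(N-p)`. -/
def pStar (N : ℕ) (p : ℝ) : ℝ := N * p / (N - p)

/-- The best Sobolev constant `S` on `ℝ^N`. -/
def sobolevS (N : ℕ) (p : ℝ) : ℝ :=
  sInf {r : ℝ | ∃ u : EuclideanSpace ℝ (Fin N) → ℝ,
    ContDiff ℝ 1 u ∧ HasCompactSupport u ∧ u ≠ 0 ∧
    r = (∫ x, ‖gradient u x‖ ^ p) / (∫ x, |u x| ^ pStar N p) ^ (p / pStar N p)}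

/-- The modified energy functional `I_μ` associated with the truncated problem. -/
def modEnergy (N : ℕ) (p lam μ : ℝ) (Ω : Set (EuclideanSpace ℝ (Fin N)))
    (u : EuclideanSpace ℝ (Fin N) → ℝ) : ℝ :=
  (∫ x in Ω, (‖gradient u x‖ ^ p / p - lam * max (u x) 0 ^ p / p
    - max (u x) 0 ^ pStar N p / pStar N p)) +
  μ * ((∫ x in Ω ∩ {x | 0 ≤ u x}, u x) +
    (∫ x in Ω ∩ {x | -1 < u x ∧ u x < 0}, (u x - |u x| ^ (p - 1) * u x / p)) -
    (1 - 1 / p) * (volume (Ω ∩ {x | u x ≤ -1})).toReal)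

/-! ### Auxiliary lemmas -/

lemma rpow_cont {q : ℝ} (hq : 0 < q) : Continuous fun t : ℝ => t ^ q :=
  continuous_iff_continuousAt.2 fun x => Real.continuousAt_rpow_const x q (Or.inr hq.le)

lemma norm_gradient_eq {N : ℕ} (v : EuclideanSpace ℝ (Fin N) → ℝ) (x) :
    ‖gradient v x‖ = ‖fderiv ℝ v x‖ := (InnerProductSpace.toDual ℝ _).symm.norm_map _

lemma sobolev_aux {N : ℕ} {p : ℝ} (hp : 1 < p) (hpN : p < N)
    {v : EuclideanSpace ℝ (Fin N) → ℝ} (hv : ContDiff ℝ 1 v) (h2v : HasCompactSupport v)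
    (hvne : v ≠ 0) :
    0 < (∫ x, |v x| ^ pStar N p) ∧
    (∫ x, |v x| ^ pStar N p) ^ (pStar N p)⁻¹ ≤
      ((eLpNormLESNormFDerivOfEqInnerConst (volume : Measure (EuclideanSpace ℝ (Fin N))) p : ℝ≥0) : ℝ)
        * (∫ x, ‖gradient v x‖ ^ p) ^ p⁻¹ := by
  have hp0 : (0:ℝ) < p := lt_trans one_pos hp
  have hN0 : (0:ℝ) < N := lt_trans hp0 hpN
  have hNp : (0:ℝ) < N - p := sub_pos.mpr hpN
  have hpS0 : 0 < pStar N p := by rw [pStar]; positivity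
  -- GNS
  have h1 : 1 ≤ p.toNNReal := by
    rw [← Real.toNNReal_one]; exact Real.toNNReal_le_toNNReal hp.le
  have h2 : 0 < Module.finrank ℝ (EuclideanSpace ℝ (Fin N)) := by
    rw [finrank_euclideanSpace_fin]; exact_mod_cast hN0
  have h3 : (((pStar N p).toNNReal : ℝ))⁻¹ = (p.toNNReal : ℝ)⁻¹ - (Module.finrank ℝ (EuclideanSpace ℝ (Fin N)) : ℝ)⁻¹ := by
    rw [finrank_euclideanSpace_fin, Real.coe_toNNReal _ hpS0.le, Real.coe_toNNReal _ hp0.le, pStar]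
    field_simp
  have hgns := eLpNorm_le_eLpNorm_fderiv_of_eq_inner volume hv h2v h1 h2 h3
  -- convert eLpNorms
  have hvc : Continuous v := hv.continuous
  have hml : MemLp v ((pStar N p).toNNReal) volume := hvc.memLp_of_hasCompactSupport h2v
  have hfc : Continuous (fderiv ℝ v) := hv.continuous_fderiv one_ne_zero
  have hfs : HasCompactSupport (fderiv ℝ v) :=
    h2v.mono' (support_fderiv_subset ℝ)
  have hmf : MemLp (fderiv ℝ v) (p.toNNReal) volume := hfc.memLp_of_hasCompactSupport hfs
  rw [hml.eLpNorm_eq_integral_rpow_norm (by simpa using hpS0) ENNReal.coe_ne_top,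
      hmf.eLpNorm_eq_integral_rpow_norm (by simpa using hp0) ENNReal.coe_ne_top] at hgns
  simp only [ENNReal.coe_toReal, Real.coe_toNNReal _ hpS0.le, Real.coe_toNNReal _ hp0.le] at hgns
  rw [← ENNReal.ofReal_coe_nnreal, ← ENNReal.ofReal_mul (NNReal.coe_nonneg _)] at hgns
  have hP : (∫ x, ‖v x‖ ^ pStar N p) = ∫ x, |v x| ^ pStar N p := by
    simp [Real.norm_eq_abs]
  have hG : (∫ x, ‖fderiv ℝ v x‖ ^ p) = ∫ x, ‖gradient v x‖ ^ p := by
    simp [norm_gradient_eq]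
  rw [hP, hG] at hgns
  have hle := (ENNReal.ofReal_le_ofReal_iff (by positivity)).mp hgns
  refine ⟨?_, hle⟩
  -- positivity of ∫ |v|^pS
  have hint : Integrable (fun x => |v x| ^ pStar N p) volume := by
    apply Continuous.integrable_of_hasCompactSupport
    · exact (rpow_cont hpS0).comp hvc.abs
    · exact h2v.comp_left (g := fun t : ℝ => |t| ^ pStar N p) (by simp [Real.zero_rpow hpS0.ne'])
  rw [integral_pos_iff_support_of_nonneg (fun x => by positivity) hint]
  have hsub : Function.support v ⊆ Function.support fun x => |v x| ^ pStar N p := by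
    intro x hx
    have : 0 < |v x| := abs_pos.mpr hx
    simp only [Function.mem_support]
    positivity
  have hopen : IsOpen (Function.support v) := by
    have : Function.support v = v ⁻¹' ({0}ᶜ) := rfl
    rw [this]; exact isOpen_compl_singleton.preimage hvc
  obtain ⟨x₀, hx₀⟩ := Function.ne_iff.mp hvne
  exact lt_of_lt_of_le (hopen.measure_pos volume ⟨x₀, hx₀⟩) (measure_mono hsub)

lemma sobolev_bound {N : ℕ} {p : ℝ} (hp : 1 < p) (hpN : p < N)
    {u : EuclideanSpace ℝ (Fin N) → ℝ} (hu : ContDiff ℝ 1 u) (husupp : HasCompactSupport u)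
    (hne : u ≠ 0) :
    0 < sobolevS N p ∧
    (∫ x, |u x| ^ pStar N p) ≤
      sobolevS N p ^ (-(pStar N p) / p) * (∫ x, ‖gradient u x‖ ^ p) ^ (pStar N p / p) := by
  have hp0 : (0:ℝ) < p := lt_trans one_pos hp
  have hN0 : (0:ℝ) < N := lt_trans hp0 hpN
  have hNp : (0:ℝ) < N - p := sub_pos.mpr hpN
  have hpS0 : 0 < pStar N p := by rw [pStar]; positivity
  set C : ℝ := ((eLpNormLESNormFDerivOfEqInnerConst (volume : Measure (EuclideanSpace ℝ (Fin N))) p : ℝ≥0) : ℝ) with hC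
  have hC0 : 0 ≤ C := NNReal.coe_nonneg _
  have key : ∀ v : EuclideanSpace ℝ (Fin N) → ℝ, ContDiff ℝ 1 v → HasCompactSupport v → v ≠ 0 →
      0 < (∫ x, |v x| ^ pStar N p) ∧ 0 < C ∧ 0 < (∫ x, ‖gradient v x‖ ^ p) ∧
      (∫ x, |v x| ^ pStar N p) ^ (p / pStar N p) ≤ C ^ p * (∫ x, ‖gradient v x‖ ^ p) := by
    intro v hv h2v hvne
    obtain ⟨hPv, hineq⟩ := sobolev_aux hp hpN hv h2v hvne
    set Pv := ∫ x, |v x| ^ pStar N p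
    set Gv := ∫ x, ‖gradient v x‖ ^ p with hGvdef
    have hGv0 : 0 ≤ Gv := integral_nonneg fun x => by positivity
    have hlhs : 0 < Pv ^ (pStar N p)⁻¹ := Real.rpow_pos_of_pos hPv _
    have hprod : 0 < C * Gv ^ p⁻¹ := lt_of_lt_of_le hlhs hineq
    have hCpos : 0 < C := by
      rcases hC0.eq_or_lt with h | h
      · rw [← h, zero_mul] at hprod; exact absurd hprod (lt_irrefl 0)
      · exact h
    have hGvpos : 0 < Gv := by
      rcases hGv0.eq_or_lt with h | h
      · rw [← h, Real.zero_rpow (by positivity), mul_zero] at hprod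
        exact absurd hprod (lt_irrefl 0)
      · exact h
    refine ⟨hPv, hCpos, hGvpos, ?_⟩
    have h4 : (Pv ^ (pStar N p)⁻¹) ^ p ≤ (C * Gv ^ p⁻¹) ^ p :=
      Real.rpow_le_rpow (by positivity) hineq hp0.le
    calc Pv ^ (p / pStar N p) = Pv ^ ((pStar N p)⁻¹ * p) := by rw [div_eq_inv_mul]
      _ = (Pv ^ (pStar N p)⁻¹) ^ p := Real.rpow_mul hPv.le _ _
      _ ≤ (C * Gv ^ p⁻¹) ^ p := h4
      _ = C ^ p * (Gv ^ p⁻¹) ^ p := Real.mul_rpow hC0 (by positivity)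
      _ = C ^ p * Gv := by
          rw [← Real.rpow_mul hGv0, inv_mul_cancel₀ hp0.ne', Real.rpow_one]
  have humem : (∫ x, ‖gradient u x‖ ^ p) / (∫ x, |u x| ^ pStar N p) ^ (p / pStar N p)
      ∈ {r : ℝ | ∃ v : EuclideanSpace ℝ (Fin N) → ℝ,
        ContDiff ℝ 1 v ∧ HasCompactSupport v ∧ v ≠ 0 ∧
        r = (∫ x, ‖gradient v x‖ ^ p) / (∫ x, |v x| ^ pStar N p) ^ (p / pStar N p)} :=
    ⟨u, hu, husupp, hne, rfl⟩
  obtain ⟨hPu, hCpos, hGupos, hub⟩ := key u hu husupp hne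
  have hlb : ∀ r ∈ {r : ℝ | ∃ v : EuclideanSpace ℝ (Fin N) → ℝ,
        ContDiff ℝ 1 v ∧ HasCompactSupport v ∧ v ≠ 0 ∧
        r = (∫ x, ‖gradient v x‖ ^ p) / (∫ x, |v x| ^ pStar N p) ^ (p / pStar N p)},
      (C ^ p)⁻¹ ≤ r := by
    rintro r ⟨v, hv, h2v, hvne, rfl⟩
    obtain ⟨hPv, hCp, hGv, hb⟩ := key v hv h2v hvne
    have hD : 0 < (∫ x, |v x| ^ pStar N p) ^ (p / pStar N p) := Real.rpow_pos_of_pos hPv _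
    calc (C ^ p)⁻¹ = (∫ x, ‖gradient v x‖ ^ p) / (C ^ p * (∫ x, ‖gradient v x‖ ^ p)) := by
          field_simp
      _ ≤ (∫ x, ‖gradient v x‖ ^ p) / (∫ x, |v x| ^ pStar N p) ^ (p / pStar N p) :=
          div_le_div_of_nonneg_left hGv.le hD hb
  have hSlow : (C ^ p)⁻¹ ≤ sobolevS N p := le_csInf ⟨_, humem⟩ hlb
  have hSpos : 0 < sobolevS N p :=
    lt_of_lt_of_le (by positivity) hSlow
  have hSle : sobolevS N p ≤ (∫ x, ‖gradient u x‖ ^ p) / (∫ x, |u x| ^ pStar N p) ^ (p / pStar N p) :=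
    csInf_le ⟨(C ^ p)⁻¹, hlb⟩ humem
  refine ⟨hSpos, ?_⟩
  set Pu := ∫ x, |u x| ^ pStar N p
  set Gu := ∫ x, ‖gradient u x‖ ^ p
  have hDpos : 0 < Pu ^ (p / pStar N p) := Real.rpow_pos_of_pos hPu _
  have h5 : Pu ^ (p / pStar N p) ≤ Gu / sobolevS N p := by
    rw [le_div_iff₀ hSpos]
    have := (le_div_iff₀ hDpos).mp hSle
    linarith [this]
  calc Pu = (Pu ^ (p / pStar N p)) ^ (pStar N p / p) := by
        rw [← Real.rpow_mul hPu.le, div_mul_div_comm, mul_comm,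
          div_self (by positivity : pStar N p * p ≠ 0), Real.rpow_one]
    _ ≤ (Gu / sobolevS N p) ^ (pStar N p / p) :=
        Real.rpow_le_rpow hDpos.le h5 (by positivity)
    _ = Gu ^ (pStar N p / p) / sobolevS N p ^ (pStar N p / p) :=
        Real.div_rpow (integral_nonneg fun x => by positivity) hSpos.le _
    _ = sobolevS N p ^ (-(pStar N p) / p) * Gu ^ (pStar N p / p) := by
        rw [neg_div, Real.rpow_neg hSpos.le, div_eq_mul_inv, mul_comm]

lemma trunc_aux {p t : ℝ} (hp : 1 < p) (ht0 : 0 < t) (ht1 : t ≤ 1) :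
    -(1 - 1/p) ≤ -t + t ^ p / p := by
  have hp0 : (0:ℝ) < p := lt_trans one_pos hp
  have key : 1 + p * (t - 1) ≤ t ^ p := by
    have h := one_add_mul_self_le_rpow_one_add (by linarith : (-1:ℝ) ≤ t - 1) hp.le
    rwa [add_sub_cancel] at h
  have h2 : (1 + p * (t - 1)) / p ≤ t ^ p / p := by gcongr
  have h3 : (1 + p * (t - 1)) / p = 1 / p + (t - 1) := by field_simp
  linarith [h3 ▸ h2]

/-- Lower bound for the modified energy:
`I_μ(u) ≥ (1/p)(1 - λ/λ₁)‖u‖^p - (S^{-p*/p}/p*)‖u‖^{p*} - (1 - 1/p) μ |Ω|`. -/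
theorem modEnergy_lower_bound
    (N : ℕ) (p lam μ : ℝ) (Ω : Set (EuclideanSpace ℝ (Fin N)))
    (hp : 1 < p) (hpN : p < N)
    (hΩne : Ω.Nonempty) (hΩb : Bornology.IsBounded Ω) (hΩo : IsOpen Ω)
    (hlam : 0 < lam) (hlam1 : lam < lambda1 N p Ω) (hμ : 0 < μ)
    (u : EuclideanSpace ℝ (Fin N) → ℝ)
    (hu : ContDiff ℝ 1 u) (husupp : HasCompactSupport u) (hsupp : tsupport u ⊆ Ω) :
    modEnergy N p lam μ Ω u ≥
      (1 / p) * (1 - lam / lambda1 N p Ω) * (∫ x in Ω, ‖gradient u x‖ ^ p)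
      - (sobolevS N p ^ (-(pStar N p) / p) / pStar N p) *
          (∫ x in Ω, ‖gradient u x‖ ^ p) ^ (pStar N p / p)
      - (1 - 1 / p) * μ * (volume Ω).toReal := by
  have hp0 : (0:ℝ) < p := lt_trans one_pos hp
  have hN0 : (0:ℝ) < N := lt_trans hp0 hpN
  have hNp : (0:ℝ) < N - p := sub_pos.mpr hpN
  have hpS0 : 0 < pStar N p := by rw [pStar]; positivity
  have hc0 : (0:ℝ) ≤ 1 - 1/p := by
    have : 1/p < 1 := by rw [div_lt_one hp0]; exact hp
    linarith
  have hvolΩ : volume Ω ≠ ⊤ := hΩb.measure_lt_top.ne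
  have huc : Continuous u := hu.continuous
  by_cases hne : u = 0
  · -- trivial case u = 0
    subst hne
    have hgrad0 : ∀ x : EuclideanSpace ℝ (Fin N),
        ‖gradient (0 : EuclideanSpace ℝ (Fin N) → ℝ) x‖ ^ p = 0 := by
      intro x
      rw [norm_gradient_eq]
      have h0 : fderiv ℝ (0 : EuclideanSpace ℝ (Fin N) → ℝ) x = 0 := fderiv_const_apply 0
      rw [h0, norm_zero, Real.zero_rpow hp0.ne']
    have hG0 : (∫ x in Ω, ‖gradient (0 : EuclideanSpace ℝ (Fin N) → ℝ) x‖ ^ p) = 0 := by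
      simp [hgrad0]
    rw [modEnergy, hG0]
    simp only [Pi.zero_apply, hgrad0, max_self, abs_zero, Real.zero_rpow hp0.ne',
      Real.zero_rpow hpS0.ne', zero_div, mul_zero, zero_mul, sub_zero, zero_sub, neg_zero,
      integral_zero, add_zero, zero_add]
    have hset : Ω ∩ {x : EuclideanSpace ℝ (Fin N) | (0:ℝ) ≤ -1} = ∅ := by
      simp [Set.eq_empty_iff_forall_notMem]
    have hset2 : Ω ∩ {x : EuclideanSpace ℝ (Fin N) | (-1:ℝ) < 0 ∧ (0:ℝ) < 0} = ∅ := by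
      simp [Set.eq_empty_iff_forall_notMem]
    rw [Real.zero_rpow (by positivity : pStar N p / p ≠ 0)]
    have : (0:ℝ) ≤ (1 - 1/p) * μ * (volume Ω).toReal := by positivity
    simp only [hset, hset2, measure_empty, ENNReal.toReal_zero, mul_zero, sub_zero]
    nlinarith [ENNReal.toReal_nonneg (a := volume Ω), hμ.le, hc0]
  · -- main case
    -- vanishing outside Ω
    have huzero : ∀ x, x ∉ Ω → u x = 0 := fun x hx =>
      image_eq_zero_of_notMem_tsupport (fun h => hx (hsupp h))
    have hgradzero : ∀ x, x ∉ Ω → gradient u x = 0 := by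
      intro x hx
      have h1 : x ∉ tsupport u := fun h => hx (hsupp h)
      have h2 : fderiv ℝ u x = 0 :=
        Function.notMem_support.mp (fun hs => h1 (support_fderiv_subset ℝ hs))
      show (InnerProductSpace.toDual ℝ _).symm (fderiv ℝ u x) = 0
      rw [h2, map_zero]
    have hGeq : (∫ x, ‖gradient u x‖ ^ p) = ∫ x in Ω, ‖gradient u x‖ ^ p :=
      (setIntegral_eq_integral_of_forall_compl_eq_zero fun x hx => by
        rw [hgradzero x hx, norm_zero, Real.zero_rpow hp0.ne']).symm
    have hPeq : (∫ x, |u x| ^ pStar N p) = ∫ x in Ω, |u x| ^ pStar N p :=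
      (setIntegral_eq_integral_of_forall_compl_eq_zero fun x hx => by
        rw [huzero x hx, abs_zero, Real.zero_rpow hpS0.ne']).symm
    -- integrability toolkit
    have intOn : ∀ f : EuclideanSpace ℝ (Fin N) → ℝ, Continuous f → HasCompactSupport f →
        ∀ s : Set (EuclideanSpace ℝ (Fin N)), IntegrableOn f s volume :=
      fun f hf h2f s => (hf.integrable_of_hasCompactSupport h2f).integrableOn
    have hgradc : Continuous (gradient u) := by
      show Continuous fun x => (InnerProductSpace.toDual ℝ _).symm (fderiv ℝ u x)
      exact (LinearIsometryEquiv.continuous _).comp (hu.continuous_fderiv one_ne_zero)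
    have hc1 : Continuous fun x => ‖gradient u x‖ ^ p :=
      (rpow_cont hp0).comp hgradc.norm
    have hs1 : HasCompactSupport fun x => ‖gradient u x‖ ^ p := by
      apply husupp.mono'
      intro x hx
      by_contra h
      have h2 : fderiv ℝ u x = 0 := Function.notMem_support.mp (fun hs => h (support_fderiv_subset ℝ hs))
      have : gradient u x = 0 := by
        show (InnerProductSpace.toDual ℝ _).symm (fderiv ℝ u x) = 0
        rw [h2, map_zero]
      have := Function.mem_support.mp hx
      rw [‹gradient u x = 0›, norm_zero, Real.zero_rpow hp0.ne'] at this
      exact this rfl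
    have hc2 : Continuous fun x => max (u x) 0 ^ p :=
      (rpow_cont hp0).comp (huc.max continuous_const)
    have hs2 : HasCompactSupport fun x => max (u x) 0 ^ p :=
      husupp.comp_left (g := fun t : ℝ => max t 0 ^ p) (by simp [Real.zero_rpow hp0.ne'])
    have hc3 : Continuous fun x => |u x| ^ p := (rpow_cont hp0).comp huc.abs
    have hs3 : HasCompactSupport fun x => |u x| ^ p :=
      husupp.comp_left (g := fun t : ℝ => |t| ^ p) (by simp [Real.zero_rpow hp0.ne'])
    have hc4 : Continuous fun x => max (u x) 0 ^ pStar N p :=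
      (rpow_cont hpS0).comp (huc.max continuous_const)
    have hs4 : HasCompactSupport fun x => max (u x) 0 ^ pStar N p :=
      husupp.comp_left (g := fun t : ℝ => max t 0 ^ pStar N p) (by simp [Real.zero_rpow hpS0.ne'])
    have hc5 : Continuous fun x => |u x| ^ pStar N p := (rpow_cont hpS0).comp huc.abs
    have hs5 : HasCompactSupport fun x => |u x| ^ pStar N p :=
      husupp.comp_left (g := fun t : ℝ => |t| ^ pStar N p) (by simp [Real.zero_rpow hpS0.ne'])
    have hc6 : Continuous fun x => u x - |u x| ^ (p-1) * u x / p :=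
      huc.sub ((((rpow_cont (by linarith)).comp huc.abs).mul huc).div_const p)
    have hs6 : HasCompactSupport fun x => u x - |u x| ^ (p-1) * u x / p :=
      husupp.comp_left (g := fun t : ℝ => t - |t| ^ (p-1) * t / p) (by simp)
    -- λ₁ part
    have hl1pos : 0 < lambda1 N p Ω := hlam.trans hlam1
    have hbddL : BddBelow {r : ℝ | ∃ v : EuclideanSpace ℝ (Fin N) → ℝ,
        ContDiff ℝ 1 v ∧ HasCompactSupport v ∧ tsupport v ⊆ Ω ∧ v ≠ 0 ∧
        r = (∫ x in Ω, ‖gradient v x‖ ^ p) / ∫ x in Ω, |v x| ^ p} := by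
      refine ⟨0, ?_⟩
      rintro r ⟨v, _, _, _, _, rfl⟩
      exact div_nonneg (integral_nonneg fun x => by positivity)
        (integral_nonneg fun x => by positivity)
    have hl1le : lambda1 N p Ω ≤
        (∫ x in Ω, ‖gradient u x‖ ^ p) / ∫ x in Ω, |u x| ^ p :=
      csInf_le hbddL ⟨u, hu, husupp, hsupp, hne, rfl⟩
    have hG0 : (0:ℝ) ≤ ∫ x in Ω, ‖gradient u x‖ ^ p := integral_nonneg fun x => by positivity
    have hU0 : (0:ℝ) ≤ ∫ x in Ω, |u x| ^ p := integral_nonneg fun x => by positivity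
    have hUle : lam * (∫ x in Ω, |u x| ^ p)
        ≤ (lam / lambda1 N p Ω) * ∫ x in Ω, ‖gradient u x‖ ^ p := by
      rcases hU0.eq_or_lt with h | h
      · rw [← h, mul_zero]
        exact mul_nonneg (by positivity) hG0
      · have h2 : lambda1 N p Ω * (∫ x in Ω, |u x| ^ p) ≤ ∫ x in Ω, ‖gradient u x‖ ^ p :=
          (le_div_iff₀ h).mp hl1le
        calc lam * (∫ x in Ω, |u x| ^ p)
            = (lam / lambda1 N p Ω) * (lambda1 N p Ω * ∫ x in Ω, |u x| ^ p) := by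
              field_simp
          _ ≤ (lam / lambda1 N p Ω) * ∫ x in Ω, ‖gradient u x‖ ^ p :=
              mul_le_mul_of_nonneg_left h2 (by positivity)
    have hIple : (∫ x in Ω, max (u x) 0 ^ p) ≤ ∫ x in Ω, |u x| ^ p := by
      apply setIntegral_mono (intOn _ hc2 hs2 Ω) (intOn _ hc3 hs3 Ω)
      intro x
      exact Real.rpow_le_rpow (le_max_right _ _) (max_le (le_abs_self _) (abs_nonneg _)) hp0.le
    have hIpSle : (∫ x in Ω, max (u x) 0 ^ pStar N p) ≤ ∫ x in Ω, |u x| ^ pStar N p := by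
      apply setIntegral_mono (intOn _ hc4 hs4 Ω) (intOn _ hc5 hs5 Ω)
      intro x
      exact Real.rpow_le_rpow (le_max_right _ _) (max_le (le_abs_self _) (abs_nonneg _)) hpS0.le
    -- Sobolev part
    obtain ⟨hSpos, hSb⟩ := sobolev_bound hp hpN hu husupp hne
    rw [hGeq, hPeq] at hSb
    -- splitting the main integral
    have hsplit : (∫ x in Ω, (‖gradient u x‖ ^ p / p - lam * max (u x) 0 ^ p / p
          - max (u x) 0 ^ pStar N p / pStar N p))
        = (∫ x in Ω, ‖gradient u x‖ ^ p) / p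
          - lam * (∫ x in Ω, max (u x) 0 ^ p) / p
          - (∫ x in Ω, max (u x) 0 ^ pStar N p) / pStar N p := by
      have hi1 : IntegrableOn (fun x => ‖gradient u x‖ ^ p / p) Ω volume :=
        (intOn _ hc1 hs1 Ω).div_const p
      have hi2 : IntegrableOn (fun x => lam * max (u x) 0 ^ p / p) Ω volume :=
        ((intOn _ hc2 hs2 Ω).const_mul lam).div_const p
      have hi12 : IntegrableOn
          (fun x => ‖gradient u x‖ ^ p / p - lam * max (u x) 0 ^ p / p) Ω volume := hi1.sub hi2
      have hi4 : IntegrableOn (fun x => max (u x) 0 ^ pStar N p / pStar N p) Ω volume :=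
        (intOn _ hc4 hs4 Ω).div_const _
      rw [integral_sub hi12 hi4, integral_sub hi1 hi2]
      simp only [show ∀ t : ℝ, lam * t / p = (lam / p) * t from fun t => by ring]
      rw [integral_const_mul, integral_div, integral_div]
    -- μ part
    have hms₁ : MeasurableSet (Ω ∩ {x | 0 ≤ u x}) :=
      hΩo.measurableSet.inter (isClosed_le continuous_const huc).measurableSet
    have hA : 0 ≤ ∫ x in Ω ∩ {x | 0 ≤ u x}, u x :=
      setIntegral_nonneg hms₁ fun x hx => hx.2
    have hopen₂ : IsOpen {x | -1 < u x ∧ u x < 0} := by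
      rw [setOf_and]
      exact (isOpen_lt continuous_const huc).inter (isOpen_lt huc continuous_const)
    have hms₂ : MeasurableSet (Ω ∩ {x | -1 < u x ∧ u x < 0}) :=
      hΩo.measurableSet.inter hopen₂.measurableSet
    have hms₃ : MeasurableSet (Ω ∩ {x | u x ≤ -1}) :=
      hΩo.measurableSet.inter (isClosed_le huc continuous_const).measurableSet
    have hvol₂ : volume (Ω ∩ {x | -1 < u x ∧ u x < 0}) ≠ ⊤ :=
      (lt_of_le_of_lt (measure_mono inter_subset_left) hΩb.measure_lt_top).ne
    have hvol₃ : volume (Ω ∩ {x | u x ≤ -1}) ≠ ⊤ :=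
      (lt_of_le_of_lt (measure_mono inter_subset_left) hΩb.measure_lt_top).ne
    have hB : -(1 - 1/p) * (volume (Ω ∩ {x | -1 < u x ∧ u x < 0})).toReal
        ≤ ∫ x in Ω ∩ {x | -1 < u x ∧ u x < 0}, (u x - |u x| ^ (p-1) * u x / p) := by
      apply setIntegral_ge_of_const_le_real hms₂ hvol₂ _ (intOn _ hc6 hs6 _)
      rintro x ⟨-, h1, h2⟩
      have ht0 : 0 < -(u x) := by linarith
      have ht1 : -(u x) ≤ 1 := by linarith
      have habs : |u x| = -(u x) := abs_of_neg h2
      have e : (-(u x)) ^ (p-1) * (-(u x)) = (-(u x)) ^ p := by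
        rw [← Real.rpow_add_one ht0.ne' (p-1), sub_add_cancel]
      have hpow : |u x| ^ (p-1) * u x = -((-(u x)) ^ p) := by
        rw [habs, ← e]; ring
      have := trunc_aux hp ht0 ht1
      rw [hpow]
      have hux : u x = -(-(u x)) := by ring
      calc -(1 - 1/p) ≤ -(-(u x)) + (-(u x)) ^ p / p := this
        _ = u x - -((-(u x)) ^ p) / p := by ring
    have hdisj : Disjoint (Ω ∩ {x | -1 < u x ∧ u x < 0}) (Ω ∩ {x | u x ≤ -1}) := by
      rw [Set.disjoint_left]
      rintro x hx hy
      obtain ⟨-, h1, -⟩ := hx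
      obtain ⟨-, h2⟩ := hy
      simp only [mem_setOf_eq] at h1 h2
      linarith
    have hmeas : (volume (Ω ∩ {x | -1 < u x ∧ u x < 0})).toReal
        + (volume (Ω ∩ {x | u x ≤ -1})).toReal ≤ (volume Ω).toReal := by
      rw [← ENNReal.toReal_add hvol₂ hvol₃]
      apply ENNReal.toReal_mono hvolΩ
      rw [← measure_union hdisj hms₃]
      exact measure_mono (union_subset inter_subset_left inter_subset_left)
    -- assembly
    rw [modEnergy, hsplit]
    have t1 : lam * (∫ x in Ω, max (u x) 0 ^ p) / p
        ≤ ((lam / lambda1 N p Ω) * ∫ x in Ω, ‖gradient u x‖ ^ p) / p := by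
      exact div_le_div_of_nonneg_right
        (le_trans (mul_le_mul_of_nonneg_left hIple hlam.le) hUle) hp0.le
    have t2 : (∫ x in Ω, max (u x) 0 ^ pStar N p) / pStar N p
        ≤ (sobolevS N p ^ (-(pStar N p) / p)
            * (∫ x in Ω, ‖gradient u x‖ ^ p) ^ (pStar N p / p)) / pStar N p := by
      exact div_le_div_of_nonneg_right (le_trans hIpSle hSb) hpS0.le
    have t3 : μ * (-(1 - 1/p) * (volume Ω).toReal)
        ≤ μ * ((∫ x in Ω ∩ {x | 0 ≤ u x}, u x)
          + (∫ x in Ω ∩ {x | -1 < u x ∧ u x < 0}, (u x - |u x| ^ (p-1) * u x / p))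
          - (1 - 1/p) * (volume (Ω ∩ {x | u x ≤ -1})).toReal) := by
      apply mul_le_mul_of_nonneg_left _ hμ.le
      have h7 := mul_le_mul_of_nonneg_left hmeas hc0
      rw [mul_add] at h7
      linarith [hA, hB]
    have e1 : 1 / p * (1 - lam / lambda1 N p Ω) * (∫ x in Ω, ‖gradient u x‖ ^ p)
        = (∫ x in Ω, ‖gradient u x‖ ^ p) / p
          - ((lam / lambda1 N p Ω) * ∫ x in Ω, ‖gradient u x‖ ^ p) / p := by ring
    have e2 : (sobolevS N p ^ (-(pStar N p) / p) / pStar N p) *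
          (∫ x in Ω, ‖gradient u x‖ ^ p) ^ (pStar N p / p)
        = (sobolevS N p ^ (-(pStar N p) / p)
            * (∫ x in Ω, ‖gradient u x‖ ^ p) ^ (pStar N p / p)) / pStar N p := by ring
    have e3 : μ * (-(1 - 1/p) * (volume Ω).toReal)
        = -((1 - 1/p) * μ * (volume Ω).toReal) := by ring
    linarith [t1, t2, t3]
end
end
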